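/- Let p ≠ q be words of the same length over a finite alphabet, and let L be the function on words that replaces the leftmost occurrence of q by p (and is the identity if no occurrence of q exists). Then for every word w of length n there exists k such that L^k(w) contains no occurrence of q. -/

import Mathlib

open List

/-- A nonempty word `x` is a border of `p` if it is both a prefix and a suffix of `p`. -/
def Border {α : Type*} (x p : List α) : Prop := x ≠ [] ∧ x <+: p ∧ x <:+ p

/-- A proper border is a border different from the word itself. -/
def ProperBorder {α : Type*} (x p : List α) : Prop := Border x p ∧ x ≠ p

/-- The border length set of `p`. -/
def borderLengths {α : Type*} (p : List α) : Set ℕ :=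
  {n | ∃ x, Border x p ∧ x.length = n}

/-- `replL q p w` replaces the leftmost contiguous occurrence of `q` in `w` by `p`
(identity if there is no occurrence). -/
def replL {α : Type*} [DecidableEq α] (q p : List α) : List α → List α
  | [] => []
  | a :: w => if q <+: (a :: w) then p ++ (a :: w).drop q.length else a :: replL q p w

/-- `replR p q w` replaces the rightmost contiguous occurrence of `p` in `w` by `q`
(identity if there is no occurrence). -/
def replR {α : Type*} [DecidableEq α] (p q : List α) : List α → List α
  | [] => []
  | a :: w =>
    if p <:+: w then a :: replR p q w
    else if p <+: (a :: w) then q ++ (a :: w).drop p.length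
    else a :: w

/-- `phiL q p w` iterates `replL q p` a minimal number of times so that no occurrence
of `q` remains (if such an iterate exists). -/
noncomputable def phiL {α : Type*} [DecidableEq α] (q p : List α) (w : List α) : List α :=
  (replL q p)^[sInf {i | ¬ q <:+: (replL q p)^[i] w}] w

/-- `phiR p q w` iterates `replR p q` a minimal number of times so that no occurrence
of `p` remains (if such an iterate exists). -/
noncomputable def phiR {α : Type*} [DecidableEq α] (p q : List α) (w : List α) : List α :=
  (replR p q)^[sInf {j | ¬ p <:+: (replR p q)^[j] w}] w

lemma my_foldl_shift (l : List ℕ) : ∀ a : ℕ,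
    l.foldl (fun a d => 2*a+d) a = a * 2^l.length + l.foldl (fun a d => 2*a+d) 0 := by
  induction l with
  | nil => intro a; simp
  | cons d l ih =>
    intro a
    simp only [List.foldl_cons, List.length_cons]
    rw [ih (2*a+d), ih (2*0+d)]
    ring

lemma my_bval_lt (l : List ℕ) (h : ∀ d ∈ l, d ≤ 1) :
    l.foldl (fun a d => 2*a+d) 0 < 2^l.length := by
  induction l with
  | nil => simp
  | cons d l ih =>
    simp only [List.foldl_cons, List.length_cons]
    rw [my_foldl_shift]
    have hd : d ≤ 1 := h d (by simp)
    have hl : l.foldl (fun a d => 2*a+d) 0 < 2^l.length := ih (fun x hx => h x (by simp [hx]))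
    have : (2*0+d) * 2^l.length ≤ 2^l.length := by
      have := Nat.mul_le_mul_right (2^l.length) (by omega : 2*0+d ≤ 1)
      simpa using this
    calc (2*0+d) * 2^l.length + l.foldl (fun a d => 2*a+d) 0
        < 2^l.length + 2^l.length := by omega
      _ = 2^(l.length+1) := by ring

lemma my_split_ne {α : Type*} : ∀ p q : List α, p.length = q.length → p ≠ q →
    ∃ (s : List α) (a b : α) (t1 t2 : List α), a ≠ b ∧ t1.length = t2.length ∧
      p = s ++ a :: t1 ∧ q = s ++ b :: t2 := by
  intro p
  induction p with
  | nil => intro q hl hne; cases q <;> simp_all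
  | cons x p ih =>
    intro q hl hne
    cases q with
    | nil => simp at hl
    | cons y q =>
      by_cases hxy : x = y
      · subst hxy
        have hpq : p ≠ q := by rintro rfl; exact hne rfl
        obtain ⟨s, a, b, t1, t2, hab, ht, hp, hq⟩ := ih q (by simpa using hl) hpq
        exact ⟨x :: s, a, b, t1, t2, hab, ht, by simp [hp], by simp [hq]⟩
      · exact ⟨[], x, y, p, q, hxy, by simpa using hl, rfl, rfl⟩

lemma my_replL_spec {α : Type*} [DecidableEq α] (q p : List α) (hq : q ≠ []) :
    ∀ w, q <:+: w → ∃ u v, w = u ++ q ++ v ∧ replL q p w = u ++ p ++ v := by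
  intro w
  induction w with
  | nil => intro h; exact absurd (List.eq_nil_of_infix_nil h) hq
  | cons a w ih =>
    intro h
    by_cases hpre : q <+: (a :: w)
    · obtain ⟨v, hv⟩ := hpre
      refine ⟨[], v, by simp [hv.symm], ?_⟩
      have hpre' : q <+: (a :: w) := ⟨v, hv⟩
      simp only [replL, if_pos hpre']
      rw [← hv, List.drop_append_of_le_length (le_refl _)]
      simp
    · have hw : q <:+: w := by
        rcases (List.infix_cons_iff.mp h) with h' | h'
        · exact absurd h' hpre
        · exact h'
      obtain ⟨u, v, huv, hr⟩ := ih hw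
      refine ⟨a :: u, v, by simp [huv], ?_⟩
      simp only [replL, if_neg hpre, hr]
      simp

/-- If `p ≠ q` have equal length, then iterating the leftmost replacement of `q` by `p`
eventually yields a word with no occurrence of `q`. -/
theorem stmt_5 {α : Type*} [Fintype α] [DecidableEq α] {p q : List α}
    (hne : p ≠ q) (hlen : p.length = q.length) (n : ℕ) (w : List α) (hw : w.length = n) :
    ∃ k, ¬ q <:+: (replL q p)^[k] w := by
  by_contra hcon
  push_neg at hcon
  have hq : q ≠ [] := by
    rintro rfl
    exact hne (List.length_eq_zero_iff.mp (by simpa using hlen))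
  obtain ⟨s, a, b, t1, t2, hab, ht, hp, hqd⟩ := my_split_ne p q hlen hne
  set c : α → ℕ := fun x => if x = b then 1 else 0 with hc
  set val : List α → ℕ := fun x => (x.map c).foldl (fun a d => 2*a+d) 0 with hval
  have hdig : ∀ x : List α, ∀ d ∈ x.map c, d ≤ 1 := by
    intro x d hd
    simp only [List.mem_map] at hd
    obtain ⟨y, _, rfl⟩ := hd
    simp only [hc]
    split <;> omega
  have hca : c a = 0 := by simp [hc, hab]
  have hcb : c b = 1 := by simp [hc]
  -- val p < val q
  have hpq : val p < val q := by
    have hm : (t1.map c).length = (t2.map c).length := by simpa using ht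
    set A := (s.map c).foldl (fun a d => 2*a+d) 0 with hA
    have hvp : val p = (2*A) * 2^(t1.map c).length + (t1.map c).foldl (fun a d => 2*a+d) 0 := by
      simp only [hval, hp, List.map_append, List.foldl_append, List.map_cons, List.foldl_cons,
        hca, ← hA]
      rw [my_foldl_shift]
      ring
    have hvq : val q = (2*A+1) * 2^(t2.map c).length + (t2.map c).foldl (fun a d => 2*a+d) 0 := by
      simp only [hval, hqd, List.map_append, List.foldl_append, List.map_cons, List.foldl_cons,
        hcb, ← hA]
      rw [my_foldl_shift]
    have h1 : (t1.map c).foldl (fun a d => 2*a+d) 0 < 2^(t1.map c).length :=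
      my_bval_lt _ (hdig t1)
    rw [hvp, hvq, ← hm]
    nlinarith [(Nat.pow_pos (by norm_num : 0 < 2) : 0 < 2^(t1.map c).length)]
  -- replacement strictly decreases val
  have hdec : ∀ x, q <:+: x → val (replL q p x) < val x := by
    intro x hinf
    obtain ⟨u, v, hx, hr⟩ := my_replL_spec q p hq x hinf
    have hform : ∀ y : List α, y.length = q.length →
        val (u ++ y ++ v) =
          (((u.map c).foldl (fun a d => 2*a+d) 0) * 2^q.length + val y) * 2^(v.map c).length
            + (v.map c).foldl (fun a d => 2*a+d) 0 := by
      intro y hy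
      simp only [hval, List.map_append, List.foldl_append]
      rw [my_foldl_shift (y.map c), my_foldl_shift (v.map c)]
      simp [hy]
    rw [hr, hx, hform p hlen, hform q rfl]
    have h2 : 0 < 2^(v.map c).length := Nat.pow_pos (by norm_num)
    have := Nat.mul_lt_mul_of_lt_of_le
      (Nat.add_lt_add_left hpq ((u.map c).foldl (fun a d => 2*a+d) 0 * 2^q.length))
      (le_refl (2^(v.map c).length)) h2
    omega
  -- strictly decreasing ℕ-sequence: contradiction
  have key : ∀ k, val ((replL q p)^[k] w) + k ≤ val w := by
    intro k
    induction k with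
    | zero => simp
    | succ k ih =>
      have := hdec ((replL q p)^[k] w) (hcon k)
      rw [Function.iterate_succ_apply']
      omega
  have := key (val w + 1)
  omega
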